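/- Axiom (R5) (the right-hand identity law) is independent of the remaining Tarski axioms: on any Boolean algebra with at least two elements, define r;s=0 for all r,s, converse as the identity function, and 1' arbitrary. Then (R1)-(R4) and (R6)-(R10) hold but (R5) fails. -/
import Mathlib

/-- Axiom (R5) (the right-hand identity law) is independent of the remaining
Tarski axioms: on any Boolean algebra with at least two elements, with
r;s = 0 for all r,s, converse the identity, and 1' arbitrary, axioms
(R1)-(R4) and (R6)-(R10) hold but (R5) fails. -/
theorem R5_independent {A : Type*} [BooleanAlgebra A]
    (h2 : ∃ x y : A, x ≠ y) (e : A) :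
    (∀ r s : A, r ⊔ s = s ⊔ r) ∧
    (∀ r s t : A, r ⊔ (s ⊔ t) = (r ⊔ s) ⊔ t) ∧
    (∀ r s : A, (rᶜ ⊔ s)ᶜ ⊔ (rᶜ ⊔ sᶜ)ᶜ = r) ∧
    (∀ r s t : A, (fun _ _ => (⊥ : A)) r ((fun _ _ => (⊥ : A)) s t) =
      (fun _ _ => (⊥ : A)) ((fun _ _ => (⊥ : A)) r s) t) ∧
    (∀ r : A, id (id r) = r) ∧
    (∀ r s : A, id ((fun _ _ => (⊥ : A)) r s) = (fun _ _ => (⊥ : A)) (id s) (id r)) ∧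
    (∀ r s t : A, (fun _ _ => (⊥ : A)) (r ⊔ s) t =
      (fun _ _ => (⊥ : A)) r t ⊔ (fun _ _ => (⊥ : A)) s t) ∧
    (∀ r s : A, id (r ⊔ s) = id r ⊔ id s) ∧
    (∀ r s : A, (fun _ _ => (⊥ : A)) (id r) ((fun _ _ => (⊥ : A)) r s)ᶜ ⊔ sᶜ = sᶜ) ∧
    ¬ (∀ r : A, (fun _ _ => (⊥ : A)) r e = r) := by
  refine ⟨fun r s => sup_comm r s, fun r s t => (sup_assoc r s t).symm,
    fun r s => ?_, fun _ _ _ => rfl, fun _ => rfl, fun _ _ => rfl,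
    fun _ _ _ => (bot_sup_eq ⊥).symm, fun _ _ => rfl, fun _ _ => bot_sup_eq _,
    fun h => ?_⟩
  · rw [compl_sup, compl_sup, compl_compl, compl_compl, ← inf_sup_left, compl_sup_eq_top, inf_top_eq]
  · obtain ⟨x, y, hxy⟩ := h2
    exact hxy ((h x).symm.trans (h y))
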